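/- arXiv:1704.00256 — 2 statements merged into one kernel-verified Lean document; each statement's English description precedes it below -/
import Mathlib

section
/- Let a, b, c, v be real constants with a > 0, b > 0, v > 0. Define, for t ≥ 0 and s > 0, C(t, s) := (1 − s·a·b^(−2v)·Γ(2v, bt)·e^(bt)) / (s·e^(bt)), A(t, s) := s·e^(bt) / (1 − s·e^(bt)·a·b^(−2v)·(Γ(2v, bt) − Γ(2v))), and G(t; C) := ∫_0^t c / (a·b^(−2v)·Γ(2v, bμ)·e^(bμ) + e^(bμ)·C) dμ. Let π : (0, ∞) → ℝ be continuously differentiable and f : [0, ∞) → ℝ be continuous, and define ω(t, s) := e^(−G(t; C(t,s)))·π(A(t, s)) + e^(−G(t; C(t,s)))·∫_0^t f(τ)·e^(G(τ; C(t,s))) dτ. Then at every point (t, s) with t > 0 and s > 0 such that a·b^(−2v)·Γ(2v, bμ)·e^(bμ) + e^(bμ)·C(t, s) > 0 for all μ ∈ [0, t] and 1 − s·e^(bt)·a·b^(−2v)·(Γ(2v, bt) − Γ(2v)) > 0, the function ω has partial derivatives ω_t and ω_s and satisfies the first-order partial differential equation ω_t(t, s) + s·(a·t^(2v−1)·s −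 b)·ω_s(t, s) = −c·s·ω(t, s) + f(t). -/
open Real MeasureTheory intervalIntegral

/-- The upper incomplete gamma function `Γ(q, p) = ∫_p^∞ x^(q−1) e^(−x) dx`;
`upperGamma q 0` is the usual gamma function `Γ(q)`. -/
noncomputable def upperGamma (q p : ℝ) : ℝ := ∫ x in Set.Ioi p, x ^ (q - 1) * Real.exp (-x)

/-- The denominator `a·b^(−2v)·Γ(2v, bμ)·e^(bμ) + e^(bμ)·C`. -/
noncomputable def Dfun (a b v C μ : ℝ) : ℝ :=
  a * b ^ (-(2 * v)) * upperGamma (2 * v) (b * μ) * Real.exp (b * μ) + Real.exp (b * μ) * C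

/-- `G(t; C) = ∫_0^t c / (a·b^(−2v)·Γ(2v, bμ)·e^(bμ) + e^(bμ)·C) dμ`. -/
noncomputable def Gfun (a b c v C t : ℝ) : ℝ :=
  ∫ μ in (0 : ℝ)..t, c / Dfun a b v C μ

/-- The characteristic constant `C(t, s) = (1 − s·a·b^(−2v)·Γ(2v, bt)·e^(bt)) / (s·e^(bt))`. -/
noncomputable def Cfun (a b v t s : ℝ) : ℝ :=
  (1 - s * a * b ^ (-(2 * v)) * upperGamma (2 * v) (b * t) * Real.exp (b * t)) /
    (s * Real.exp (b * t))

/-- The argument `A(t, s) = s·e^(bt) / (1 − s·e^(bt)·a·b^(−2v)·(Γ(2v, bt) − Γ(2v)))`. -/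
noncomputable def Afun (a b v t s : ℝ) : ℝ :=
  s * Real.exp (b * t) /
    (1 - s * Real.exp (b * t) * a * b ^ (-(2 * v)) *
      (upperGamma (2 * v) (b * t) - upperGamma (2 * v) 0))

/-- The general solution
`ω(t, s) = e^(−G(t; C(t,s)))·π(A(t, s)) + e^(−G(t; C(t,s)))·∫_0^t f(τ)·e^(G(τ; C(t,s))) dτ`. -/
noncomputable def omegaSol (a b c v : ℝ) (piT f : ℝ → ℝ) (t s : ℝ) : ℝ :=
  Real.exp (-Gfun a b c v (Cfun a b v t s) t) * piT (Afun a b v t s) +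
    Real.exp (-Gfun a b c v (Cfun a b v t s) t) *
      ∫ τ in (0 : ℝ)..t, f τ * Real.exp (Gfun a b c v (Cfun a b v t s) τ)

set_option maxHeartbeats 1600000
open Filter Topology

/- ### Auxiliary definitions and lemmas -/

/-- `H(C, μ) = a b^(-2v) Γ(2v, bμ) + C`, so that `Dfun = e^(bμ) H`. -/
noncomputable def Hfun (a b v C μ : ℝ) : ℝ :=
  a * b ^ (-(2 * v)) * upperGamma (2 * v) (b * μ) + C

/-- The partial derivative of `Gfun` in `C`. -/
noncomputable def Pfun (a b c v C τ : ℝ) : ℝ :=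
  ∫ μ in (0 : ℝ)..τ, -c / (Real.exp (b * μ) * (Hfun a b v C μ) ^ 2)

/-- The inner integral term of `omegaSol`. -/
noncomputable def Psif (a b c v : ℝ) (f : ℝ → ℝ) (C t' : ℝ) : ℝ :=
  ∫ τ in (0 : ℝ)..t', f τ * Real.exp (Gfun a b c v C τ)

lemma Dfun_eq (a b v C μ : ℝ) : Dfun a b v C μ = Real.exp (b * μ) * Hfun a b v C μ := by
  unfold Dfun Hfun; ring

lemma uG_integrable {q : ℝ} (hq : 0 < q) :
    IntegrableOn (fun x : ℝ => x ^ (q - 1) * Real.exp (-x)) (Set.Ioi 0) := by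
  have := Real.GammaIntegral_convergent hq
  exact this.congr_fun (fun x _ => mul_comm _ _) measurableSet_Ioi

lemma upperGamma_eq {q : ℝ} (hq : 0 < q) {p : ℝ} (hp : 0 ≤ p) :
    upperGamma q p = upperGamma q 0 - ∫ x in (0:ℝ)..p, x ^ (q - 1) * Real.exp (-x) := by
  have hint := uG_integrable hq
  have h1 : IntegrableOn (fun x : ℝ => x ^ (q - 1) * Real.exp (-x)) (Set.Ioc 0 p) :=
    hint.mono_set Set.Ioc_subset_Ioi_self
  have h2 : IntegrableOn (fun x : ℝ => x ^ (q - 1) * Real.exp (-x)) (Set.Ioi p) :=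
    hint.mono_set (Set.Ioi_subset_Ioi hp)
  have hsplit : upperGamma q 0 =
      (∫ x in Set.Ioc 0 p, x ^ (q - 1) * Real.exp (-x)) + upperGamma q p := by
    unfold upperGamma
    rw [← MeasureTheory.setIntegral_union (Set.Ioc_disjoint_Ioi le_rfl) measurableSet_Ioi h1 h2,
      Set.Ioc_union_Ioi_eq_Ioi hp]
  rw [intervalIntegral.integral_of_le hp]
  rw [hsplit]; ring

lemma continuousOn_uG_integrand {q : ℝ} :
    ContinuousOn (fun x : ℝ => x ^ (q - 1) * Real.exp (-x)) (Set.Ioi 0) := by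
  refine ContinuousOn.mul ?_ (Continuous.continuousOn (by continuity))
  exact fun x hx => (Real.continuousAt_rpow_const x _ (Or.inl (ne_of_gt hx))).continuousWithinAt

lemma hasDerivAt_upperGamma {q : ℝ} (hq : 0 < q) {p : ℝ} (hp : 0 < p) :
    HasDerivAt (upperGamma q) (-(p ^ (q - 1) * Real.exp (-p))) p := by
  have hev : (fun x => upperGamma q 0 - ∫ u in (0:ℝ)..x, u ^ (q - 1) * Real.exp (-u))
      =ᶠ[nhds p] upperGamma q := by
    filter_upwards [eventually_gt_nhds hp] with x hx
    exact (upperGamma_eq hq hx.le).symm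
  refine HasDerivAt.congr_of_eventuallyEq ?_ hev.symm
  have hint : IntervalIntegrable (fun u : ℝ => u ^ (q - 1) * Real.exp (-u)) volume 0 p := by
    rw [intervalIntegrable_iff_integrableOn_Ioc_of_le hp.le]
    exact (uG_integrable hq).mono_set Set.Ioc_subset_Ioi_self
  have hmeas : StronglyMeasurableAtFilter (fun u : ℝ => u ^ (q - 1) * Real.exp (-u)) (nhds p) :=
    ContinuousOn.stronglyMeasurableAtFilter isOpen_Ioi continuousOn_uG_integrand _ hp
  have hca : ContinuousAt (fun u : ℝ => u ^ (q - 1) * Real.exp (-u)) p :=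
    continuousOn_uG_integrand.continuousAt (Ioi_mem_nhds hp)
  have := (intervalIntegral.integral_hasDerivAt_right hint hmeas hca).const_sub (upperGamma q 0)
  simpa using this

lemma continuousOn_upperGamma {q : ℝ} (hq : 0 < q) (T : ℝ) :
    ContinuousOn (upperGamma q) (Set.Icc 0 T) := by
  rcases le_or_gt 0 T with hT | hT
  · have hint : IntegrableOn (fun u : ℝ => u ^ (q - 1) * Real.exp (-u)) (Set.Icc 0 T) := by
      rw [integrableOn_Icc_iff_integrableOn_Ioc]
      exact (uG_integrable hq).mono_set Set.Ioc_subset_Ioi_self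
    have hcont := intervalIntegral.continuousOn_primitive
      (f := fun u : ℝ => u ^ (q - 1) * Real.exp (-u)) (μ := volume) hint
    have heq : ∀ x ∈ Set.Icc 0 T,
        upperGamma q 0 - ∫ u in Set.Ioc 0 x, u ^ (q-1) * Real.exp (-u) = upperGamma q x := by
      intro x hx
      rw [upperGamma_eq hq hx.1, intervalIntegral.integral_of_le hx.1]
    exact (continuousOn_congr heq).mp (continuousOn_const.sub hcont)
  · rw [Set.Icc_eq_empty (by linarith)]; exact continuousOn_empty _

open Filter Topology in
lemma hasDerivAt_comp2 {Φ : ℝ → ℝ → ℝ} {σ : ℝ → ℝ} {t C₀ σ' P Q : ℝ}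
    (hσ : HasDerivAt σ σ' t) (hσt : σ t = C₀)
    (hP : HasDerivAt (fun C => Φ t C) P C₀)
    (hQ : ∀ ε > (0:ℝ), ∃ δ > (0:ℝ), ∀ t' C, |t' - t| < δ → |C - C₀| < δ →
      |Φ t' C - Φ t C - Q * (t' - t)| ≤ ε * |t' - t|) :
    HasDerivAt (fun t' => Φ t' (σ t')) (Q + P * σ') t := by
  have hf1 : HasDerivAt (fun t' => Φ t (σ t')) (P * σ') t := by
    have := (hσt ▸ hP).comp t hσ
    simpa [mul_comm, Function.comp_def] using this
  have hA : HasDerivAt (fun t' => Φ t' (σ t') - Φ t (σ t') - Q * (t' - t)) 0 t := by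
    rw [hasDerivAt_iff_isLittleO]
    simp only [sub_self, mul_zero, smul_zero, sub_zero, mul_zero, hσt]
    rw [Asymptotics.isLittleO_iff]
    intro ε hε
    obtain ⟨δ, hδ, hδ2⟩ := hQ ε hε
    have h1 : ∀ᶠ t' in 𝓝 t, |t' - t| < δ := by
      have : ContinuousAt (fun t' : ℝ => |t' - t|) t := by fun_prop
      have := this.eventually_lt continuousAt_const (by simpa using hδ)
      simpa using this
    have h2 : ∀ᶠ t' in 𝓝 t, |σ t' - C₀| < δ := by
      have hc : ContinuousAt (fun t' : ℝ => |σ t' - C₀|) t :=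
        ((hσ.continuousAt.sub continuousAt_const).abs)
      have := hc.eventually_lt continuousAt_const (by simpa [hσt] using hδ)
      simpa using this
    filter_upwards [h1, h2] with t' h1' h2'
    simpa [Real.norm_eq_abs] using hδ2 t' (σ t') h1' h2'
  have heq : (fun t' => Φ t' (σ t')) =
      fun t' => (Φ t' (σ t') - Φ t (σ t') - Q * (t' - t)) + (Φ t (σ t')) + Q * (t' - t) := by
    funext t'; ring
  rw [heq]
  have hlin : HasDerivAt (fun t' : ℝ => Q * (t' - t)) Q t := by
    simpa using ((hasDerivAt_id t).sub_const t).const_mul Q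
  have := (hA.add hf1).add hlin
  refine this.congr_deriv ?_
  ring

lemma abs_sub_le_of_mem_uIoc {a b μ : ℝ} (h : μ ∈ Set.uIoc a b) : |μ - a| ≤ |b - a| := by
  rcases le_total a b with hab | hab
  · rw [Set.uIoc_of_le hab] at h
    rw [abs_of_nonneg (by linarith [h.1.le] : (0:ℝ) ≤ μ - a),
      abs_of_nonneg (by linarith : (0:ℝ) ≤ b - a)]
    linarith [h.2]
  · rw [Set.uIoc_of_ge hab] at h
    rw [abs_of_nonpos (by linarith [h.2] : μ - a ≤ 0), abs_of_nonpos (by linarith : b - a ≤ 0)]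
    linarith [h.1.le]

/-- Lemma 1 of the paper: at every admissible point `(t, s)` the function `ω` has partial
derivatives `ω_t`, `ω_s` and satisfies
`ω_t + s·(a·t^(2v−1)·s − b)·ω_s = −c·s·ω + f(t)`. -/
theorem stmt5 (a b c v : ℝ) (ha : 0 < a) (hb : 0 < b) (hv : 0 < v)
    (piT f : ℝ → ℝ) (hπ : ContDiffOn ℝ 1 piT (Set.Ioi 0)) (hf : ContinuousOn f (Set.Ici 0))
    (t s : ℝ) (ht : 0 < t) (hs : 0 < s)
    (hpos : ∀ μ ∈ Set.Icc (0 : ℝ) t, 0 < Dfun a b v (Cfun a b v t s) μ)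
    (hden : 0 < 1 - s * Real.exp (b * t) * a * b ^ (-(2 * v)) *
      (upperGamma (2 * v) (b * t) - upperGamma (2 * v) 0)) :
    ∃ ωt ωs : ℝ,
      HasDerivAt (fun t' : ℝ => omegaSol a b c v piT f t' s) ωt t ∧
      HasDerivAt (fun s' : ℝ => omegaSol a b c v piT f t s') ωs s ∧
      ωt + s * (a * t ^ (2 * v - 1) * s - b) * ωs
        = -c * s * omegaSol a b c v piT f t s + f t := by
  have hq : (0:ℝ) < 2 * v := by linarith
  have hbt : 0 < b * t := by positivity
  have hE : (0:ℝ) < Real.exp (b * t) := Real.exp_pos _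
  have hsne : s ≠ 0 := ne_of_gt hs
  have hbt' : HasDerivAt (fun t' : ℝ => b * t') b t := by
    simpa using (hasDerivAt_id t).const_mul b
  have hHcont' : ∀ C T', ContinuousOn (fun μ => Hfun a b v C μ) (Set.Icc 0 T') := by
    intro C T'
    rcases le_or_gt 0 T' with hT' | hT'
    · have h1 : ContinuousOn (fun μ : ℝ => upperGamma (2*v) (b*μ)) (Set.Icc 0 T') := by
        refine (continuousOn_upperGamma hq (b*T')).comp
          (Continuous.continuousOn (by continuity)) ?_
        intro μ hμ
        exact ⟨mul_nonneg hb.le hμ.1, mul_le_mul_of_nonneg_left hμ.2 hb.le⟩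
      simp only [Hfun]
      exact (continuousOn_const.mul h1).add continuousOn_const
    · rw [Set.Icc_eq_empty (by linarith)]; exact continuousOn_empty _
  -- Stage A : a compact margin and a uniform lower bound on `Hfun`.
  obtain ⟨T, m2, hTt, hm2, hball⟩ : ∃ T m2, t < T ∧ 0 < m2 ∧
      ∀ C μ, |C - (Cfun a b v t s)| ≤ m2 → μ ∈ Set.Icc 0 T → m2 ≤ Hfun a b v C μ := by
    have hHpos : ∀ μ ∈ Set.Icc (0:ℝ) t, 0 < Hfun a b v (Cfun a b v t s) μ := by
      intro μ hμ
      have h := hpos μ hμ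
      rw [Dfun_eq] at h
      nlinarith [Real.exp_pos (b*μ)]
    have hcφ : ContinuousAt (fun μ => Hfun a b v (Cfun a b v t s) μ) t := by
      have h2 : ContinuousAt (fun μ => upperGamma (2*v) (b*μ)) t :=
        ((hasDerivAt_upperGamma hq hbt).comp t hbt').continuousAt
      simp only [Hfun]
      exact (continuousAt_const.mul h2).add continuousAt_const
    have hφt : 0 < Hfun a b v (Cfun a b v t s) t := hHpos t ⟨ht.le, le_rfl⟩
    have hev : ∀ᶠ μ in 𝓝 t,
        Hfun a b v (Cfun a b v t s) t / 2 < Hfun a b v (Cfun a b v t s) μ :=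
      continuousAt_const.eventually_lt hcφ (by linarith)
    obtain ⟨δ1, hδ1, hδ1'⟩ := Metric.eventually_nhds_iff.mp hev
    set T := t + δ1/2 with hTdef
    obtain ⟨μ₀, hμ₀mem, hmin⟩ := isCompact_Icc.exists_isMinOn
      (Set.nonempty_Icc.mpr (by rw [hTdef]; linarith)) (hHcont' (Cfun a b v t s) T)
    have hm0 : 0 < Hfun a b v (Cfun a b v t s) μ₀ := by
      rcases le_or_gt μ₀ t with h | h
      · exact hHpos μ₀ ⟨hμ₀mem.1, h⟩
      · refine lt_trans (by linarith) (hδ1' ?_)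
        rw [Real.dist_eq, abs_of_pos (by linarith)]
        have := hμ₀mem.2
        rw [hTdef] at this
        linarith
    refine ⟨T, Hfun a b v (Cfun a b v t s) μ₀ / 2, by rw [hTdef]; linarith, by linarith, ?_⟩
    intro C μ hC hμ
    have h1 : Hfun a b v (Cfun a b v t s) μ₀ ≤ Hfun a b v (Cfun a b v t s) μ :=
      isMinOn_iff.mp hmin μ hμ
    have h2 : Hfun a b v C μ = Hfun a b v (Cfun a b v t s) μ + (C - Cfun a b v t s) := by
      simp only [Hfun]; ring
    have h3 := abs_le.mp hC
    linarith [h3.1, h3.2]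
  have hT0 : 0 < T := ht.trans hTt
  have htmemIcc : t ∈ Set.Icc (0:ℝ) T := ⟨ht.le, hTt.le⟩
  have hHcont : ∀ C, ContinuousOn (fun μ => Hfun a b v C μ) (Set.Icc 0 T) :=
    fun C => hHcont' C T
  have hhcont : ∀ C, |C - (Cfun a b v t s)| ≤ m2 →
      ContinuousOn (fun μ => c / Dfun a b v C μ) (Set.Icc 0 T) := by
    intro C hC
    have hDc : ContinuousOn (fun μ => Dfun a b v C μ) (Set.Icc 0 T) := by
      have : ContinuousOn (fun μ : ℝ => Real.exp (b*μ)) (Set.Icc 0 T) :=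
        Continuous.continuousOn (by continuity)
      simpa only [← Dfun_eq, Pi.mul_def] using this.mul (hHcont C)
    refine continuousOn_const.div hDc ?_
    intro μ hμ
    rw [Dfun_eq]
    exact ne_of_gt (by nlinarith [Real.exp_pos (b*μ), hball C μ hC hμ])
  have hhabs : ∀ C μ, |C - (Cfun a b v t s)| ≤ m2 → μ ∈ Set.Icc 0 T →
      |c / Dfun a b v C μ| ≤ |c| / m2 := by
    intro C μ hC hμ
    have hH := hball C μ hC hμ
    have he1 : (1:ℝ) ≤ Real.exp (b*μ) := by
      rw [← Real.exp_zero]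
      exact Real.exp_le_exp.mpr (mul_nonneg hb.le hμ.1)
    have hD : m2 ≤ Dfun a b v C μ := by
      rw [Dfun_eq]; nlinarith
    rw [abs_div, abs_of_pos (lt_of_lt_of_le hm2 hD)]
    exact div_le_div_of_nonneg_left (abs_nonneg c) hm2 hD
  have hhdiff : ∀ C C' μ, |C - (Cfun a b v t s)| ≤ m2 → |C' - (Cfun a b v t s)| ≤ m2 → μ ∈ Set.Icc 0 T →
      |c / Dfun a b v C μ - c / Dfun a b v C' μ| ≤ |c| / m2 ^ 2 * |C - C'| := by
    intro C C' μ hC hC' hμ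
    have hH := hball C μ hC hμ
    have hH' := hball C' μ hC' hμ
    have he1 : (1:ℝ) ≤ Real.exp (b*μ) := by
      rw [← Real.exp_zero]
      exact Real.exp_le_exp.mpr (mul_nonneg hb.le hμ.1)
    have hHne : Hfun a b v C μ ≠ 0 := ne_of_gt (lt_of_lt_of_le hm2 hH)
    have hH'ne : Hfun a b v C' μ ≠ 0 := ne_of_gt (lt_of_lt_of_le hm2 hH')
    have hEne : Real.exp (b*μ) ≠ 0 := ne_of_gt (Real.exp_pos _)
    have heq : c / Dfun a b v C μ - c / Dfun a b v C' μ =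
        -(c * (C - C')) / (Real.exp (b*μ) * Hfun a b v C μ * Hfun a b v C' μ) := by
      rw [Dfun_eq, Dfun_eq]
      have hid : Hfun a b v C' μ = Hfun a b v C μ + (C' - C) := by simp only [Hfun]; ring
      have hXne : Real.exp (b*μ) * Hfun a b v C μ ≠ 0 := mul_ne_zero hEne hHne
      have hYne : Real.exp (b*μ) * Hfun a b v C' μ ≠ 0 := mul_ne_zero hEne hH'ne
      rw [div_sub_div _ _ hXne hYne,
        div_eq_div_iff (mul_ne_zero hXne hYne) (mul_ne_zero (mul_ne_zero hEne hHne) hH'ne)]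
      rw [hid]
      ring
    rw [heq, abs_div, abs_neg, abs_mul]
    have hpos2 : 0 < Real.exp (b*μ) * Hfun a b v C μ * Hfun a b v C' μ :=
      mul_pos (mul_pos (Real.exp_pos _) (hm2.trans_le hH)) (hm2.trans_le hH')
    rw [abs_of_pos hpos2]
    have hden2 : m2 ^ 2 ≤ Real.exp (b*μ) * Hfun a b v C μ * Hfun a b v C' μ := by
      have h5 : m2 * m2 ≤ Hfun a b v C μ * Hfun a b v C' μ :=
        mul_le_mul hH hH' hm2.le (hm2.trans_le hH).le
      nlinarith [h5, he1, mul_pos (hm2.trans_le hH) (hm2.trans_le hH')]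
    calc |c| * |C - C'| / (Real.exp (b*μ) * Hfun a b v C μ * Hfun a b v C' μ)
        ≤ |c| * |C - C'| / m2 ^ 2 :=
          div_le_div_of_nonneg_left (by positivity) (by positivity) hden2
      _ = |c| / m2 ^ 2 * |C - C'| := by ring
  -- a generic integrability helper
  have hIntSub : ∀ (g : ℝ → ℝ), ContinuousOn g (Set.Icc 0 T) → ∀ x y, x ∈ Set.Icc (0:ℝ) T →
      y ∈ Set.Icc (0:ℝ) T → IntervalIntegrable g volume x y := by
    intro g hg x y hx hy
    exact (hg.mono (Set.uIcc_subset_Icc hx hy)).intervalIntegrable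
  have hexp1 : ∀ μ : ℝ, 0 ≤ μ → (1:ℝ) ≤ Real.exp (b*μ) := by
    intro μ hμ
    rw [← Real.exp_zero]
    exact Real.exp_le_exp.mpr (mul_nonneg hb.le hμ)
  -- continuity of the integrand of `Pfun`
  have hPint_cont : ∀ C, |C - (Cfun a b v t s)| ≤ m2 →
      ContinuousOn (fun μ => -c / (Real.exp (b*μ) * (Hfun a b v C μ)^2)) (Set.Icc 0 T) := by
    intro C hC
    refine continuousOn_const.div
      (((Real.continuous_exp.comp (continuous_const.mul continuous_id)).continuousOn).mul
        ((hHcont C).pow 2)) ?_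
    intro μ hμ
    have hH : 0 < Hfun a b v C μ := hm2.trans_le (hball C μ hC hμ)
    positivity
  -- a pointwise bound for the integrand of `Pfun`
  have hPint_bound : ∀ C μ, |C - (Cfun a b v t s)| ≤ m2 → μ ∈ Set.Icc 0 T →
      |(-c) / (Real.exp (b*μ) * (Hfun a b v C μ)^2)| ≤ |c| / m2 ^ 2 := by
    intro C μ hC hμ
    have hH := hball C μ hC hμ
    have hHpos : 0 < Hfun a b v C μ := hm2.trans_le hH
    have he1 := hexp1 μ hμ.1
    rw [abs_div, abs_neg, abs_of_pos (by positivity : 0 < Real.exp (b*μ) * Hfun a b v C μ ^ 2)]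
    have hden2 : m2 ^ 2 ≤ Real.exp (b*μ) * Hfun a b v C μ ^ 2 := by nlinarith
    exact div_le_div_of_nonneg_left (abs_nonneg c) (by positivity) hden2
  -- derivative of G in C
  have hGC : ∀ C', |C' - (Cfun a b v t s)| < m2 → ∀ τ ∈ Set.Icc (0:ℝ) T,
      HasDerivAt (fun C => Gfun a b c v C τ) (Pfun a b c v C' τ) C' := by
    intro C' hC' τ hτ
    have hε' : 0 < m2 - |C' - Cfun a b v t s| := by linarith
    have hsub : ∀ C ∈ Metric.ball C' (m2 - |C' - Cfun a b v t s|),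
        |C - Cfun a b v t s| ≤ m2 := by
      intro C hCb
      rw [Metric.mem_ball, Real.dist_eq] at hCb
      calc |C - Cfun a b v t s| ≤ |C - C'| + |C' - Cfun a b v t s| := abs_sub_le _ _ _
        _ ≤ m2 := by linarith
    have huIoc : Set.uIoc (0:ℝ) τ ⊆ Set.Icc 0 T := by
      rw [Set.uIoc_of_le hτ.1]
      exact Set.Ioc_subset_Icc_self.trans (Set.Icc_subset_Icc le_rfl hτ.2)
    simp only [Gfun, Pfun]
    refine (intervalIntegral.hasDerivAt_integral_of_dominated_loc_of_deriv_le
      (F := fun C μ => c / Dfun a b v C μ)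
      (F' := fun C μ => -c / (Real.exp (b*μ) * (Hfun a b v C μ)^2))
      (bound := fun _ => |c| / m2 ^ 2) (Metric.ball_mem_nhds C' hε') ?_ ?_ ?_ ?_ ?_ ?_).2
    · filter_upwards [Metric.ball_mem_nhds C' hε'] with C hCb
      exact ((hhcont C (hsub C hCb)).mono huIoc).aestronglyMeasurable measurableSet_uIoc
    · exact hIntSub _ (hhcont C' hC'.le) 0 τ (Set.left_mem_Icc.mpr hT0.le) hτ
    · exact ((hPint_cont C' hC'.le).mono huIoc).aestronglyMeasurable measurableSet_uIoc
    · refine Eventually.of_forall (fun μ hμ C hCb => ?_)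
      rw [Real.norm_eq_abs]
      exact hPint_bound C μ (hsub C hCb) (huIoc hμ)
    · exact intervalIntegrable_const
    · refine Eventually.of_forall (fun μ hμ C hCb => ?_)
      have hμ' := huIoc hμ
      have hH := hball C μ (hsub C hCb) hμ'
      have hHpos : 0 < Hfun a b v C μ := hm2.trans_le hH
      have hEpos : (0:ℝ) < Real.exp (b*μ) := Real.exp_pos _
      have hDne : Real.exp (b*μ) * (a * b ^ (-(2*v)) * upperGamma (2*v) (b*μ) + C) ≠ 0 := by
        have hHv : Hfun a b v C μ = a * b ^ (-(2*v)) * upperGamma (2*v) (b*μ) + C := rfl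
        rw [← hHv]
        positivity
      have hlin : HasDerivAt (fun x : ℝ =>
          Real.exp (b*μ) * (a * b ^ (-(2*v)) * upperGamma (2*v) (b*μ) + x))
          (Real.exp (b*μ)) C := by
        simpa using ((hasDerivAt_id C).const_add
          (a * b ^ (-(2*v)) * upperGamma (2*v) (b*μ))).const_mul (Real.exp (b*μ))
      have hinv := (hlin.inv hDne).const_mul c
      have hfun : (fun x => c / Dfun a b v x μ) = fun x =>
          c * (Real.exp (b*μ) * (a * b ^ (-(2*v)) * upperGamma (2*v) (b*μ) + x))⁻¹ := by
        funext x
        rw [Dfun_eq, div_eq_mul_inv]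
        rfl
      rw [hfun]
      refine hinv.congr_deriv ?_
      have hHv : Hfun a b v C μ = a * b ^ (-(2*v)) * upperGamma (2*v) (b*μ) + C := rfl
      rw [← hHv]
      have hHne := ne_of_gt hHpos
      have hEne := ne_of_gt hEpos
      field_simp
  have hGcont : ∀ C, |C - (Cfun a b v t s)| ≤ m2 →
      ContinuousOn (fun τ => Gfun a b c v C τ) (Set.Icc 0 T) := by
    intro C hC
    have hint : IntervalIntegrable (fun μ => c / Dfun a b v C μ) volume 0 T :=
      hIntSub _ (hhcont C hC) 0 T (Set.left_mem_Icc.mpr hT0.le) (Set.right_mem_Icc.mpr hT0.le)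
    have := intervalIntegral.continuousOn_primitive_interval' hint Set.left_mem_uIcc
    rw [Set.uIcc_of_le hT0.le] at this
    simpa only [Gfun] using this
  have hPcont : ContinuousOn (fun τ => Pfun a b c v (Cfun a b v t s) τ) (Set.Icc 0 T) := by
    have hC0m : |Cfun a b v t s - Cfun a b v t s| ≤ m2 := by simpa using hm2.le
    have hint : IntervalIntegrable
        (fun μ => -c / (Real.exp (b*μ) * (Hfun a b v (Cfun a b v t s) μ)^2)) volume 0 T :=
      hIntSub _ (hPint_cont _ hC0m) 0 T (Set.left_mem_Icc.mpr hT0.le)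
        (Set.right_mem_Icc.mpr hT0.le)
    have := intervalIntegral.continuousOn_primitive_interval' hint Set.left_mem_uIcc
    rw [Set.uIcc_of_le hT0.le] at this
    simpa only [Pfun] using this
  have hPbound : ∀ C τ, |C - (Cfun a b v t s)| ≤ m2 → τ ∈ Set.Icc 0 T →
      |Pfun a b c v C τ| ≤ |c| / m2 ^ 2 * T := by
    intro C τ hC hτ
    have huIoc : Set.uIoc (0:ℝ) τ ⊆ Set.Icc 0 T := by
      rw [Set.uIoc_of_le hτ.1]
      exact Set.Ioc_subset_Icc_self.trans (Set.Icc_subset_Icc le_rfl hτ.2)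
    have hbd : ∀ μ ∈ Set.uIoc (0:ℝ) τ,
        ‖-c / (Real.exp (b*μ) * (Hfun a b v C μ)^2)‖ ≤ |c| / m2 ^ 2 := by
      intro μ hμ
      rw [Real.norm_eq_abs]
      exact hPint_bound C μ hC (huIoc hμ)
    have hnorm := intervalIntegral.norm_integral_le_of_norm_le_const hbd
    rw [Real.norm_eq_abs] at hnorm
    simp only [Pfun]
    refine hnorm.trans ?_
    have : |τ - 0| ≤ T := by
      rw [sub_zero, abs_of_nonneg hτ.1]; exact hτ.2
    exact mul_le_mul_of_nonneg_left this (by positivity)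
  have hGbound : ∀ C τ, |C - (Cfun a b v t s)| ≤ m2 → τ ∈ Set.Icc 0 T →
      |Gfun a b c v C τ| ≤ |c| / m2 * T := by
    intro C τ hC hτ
    have huIoc : Set.uIoc (0:ℝ) τ ⊆ Set.Icc 0 T := by
      rw [Set.uIoc_of_le hτ.1]
      exact Set.Ioc_subset_Icc_self.trans (Set.Icc_subset_Icc le_rfl hτ.2)
    have hbd : ∀ μ ∈ Set.uIoc (0:ℝ) τ, ‖c / Dfun a b v C μ‖ ≤ |c| / m2 := by
      intro μ hμ
      rw [Real.norm_eq_abs]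
      exact hhabs C μ hC (huIoc hμ)
    have hnorm := intervalIntegral.norm_integral_le_of_norm_le_const hbd
    rw [Real.norm_eq_abs] at hnorm
    simp only [Gfun]
    refine hnorm.trans ?_
    have : |τ - 0| ≤ T := by
      rw [sub_zero, abs_of_nonneg hτ.1]; exact hτ.2
    exact mul_le_mul_of_nonneg_left this (by positivity)
  have hC0m : |Cfun a b v t s - Cfun a b v t s| ≤ m2 := by simpa using hm2.le
  have hmem0 : (0:ℝ) ∈ Set.Icc (0:ℝ) T := Set.left_mem_Icc.mpr hT0.le
  have hGjoint : ∀ ε > (0:ℝ), ∃ δ > (0:ℝ), ∀ τ C, |τ - t| < δ → |C - (Cfun a b v t s)| < δ →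
      |Gfun a b c v C τ - Gfun a b c v (Cfun a b v t s) t| < ε := by
    intro ε hε
    have hL1 : (1:ℝ) ≤ |c| / m2 + |c| / m2 ^ 2 * T + 1 := by
      have h1 : (0:ℝ) ≤ |c| / m2 := by positivity
      have h2 : (0:ℝ) ≤ |c| / m2 ^ 2 * T := by positivity
      linarith
    have hLpos : (0:ℝ) < |c| / m2 + |c| / m2 ^ 2 * T + 1 := by linarith
    refine ⟨min (min t (T - t)) (min m2 (ε / (2 * (|c| / m2 + |c| / m2 ^ 2 * T + 1)))),
      lt_min (lt_min ht (by linarith)) (lt_min hm2 (by positivity)), ?_⟩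
    intro τ C hτδ hCδ
    have hτδ1 := (abs_lt.mp (hτδ.trans_le ((min_le_left _ _).trans (min_le_left _ _)))).1
    have hτδ2 := (abs_lt.mp (hτδ.trans_le ((min_le_left _ _).trans (min_le_right _ _)))).2
    have hτT : τ ∈ Set.Icc (0:ℝ) T := ⟨by linarith, by linarith⟩
    have hCm : |C - Cfun a b v t s| ≤ m2 :=
      (hCδ.trans_le ((min_le_right _ _).trans (min_le_left _ _))).le
    have hδε : |τ - t| < ε / (2 * (|c| / m2 + |c| / m2 ^ 2 * T + 1)) :=
      hτδ.trans_le ((min_le_right _ _).trans (min_le_right _ _))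
    have hδεC : |C - Cfun a b v t s| < ε / (2 * (|c| / m2 + |c| / m2 ^ 2 * T + 1)) :=
      hCδ.trans_le ((min_le_right _ _).trans (min_le_right _ _))
    -- step 1 : variation in τ
    have hint1 : IntervalIntegrable (fun μ => c / Dfun a b v C μ) volume 0 t :=
      hIntSub _ (hhcont C hCm) 0 t hmem0 htmemIcc
    have hint2 : IntervalIntegrable (fun μ => c / Dfun a b v C μ) volume t τ :=
      hIntSub _ (hhcont C hCm) t τ htmemIcc hτT
    have hadd := intervalIntegral.integral_add_adjacent_intervals hint1 hint2
    have hstep1 : |Gfun a b c v C τ - Gfun a b c v C t| ≤ |c| / m2 * |τ - t| := by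
      have heq : Gfun a b c v C τ - Gfun a b c v C t =
          ∫ μ in t..τ, c / Dfun a b v C μ := by
        simp only [Gfun]
        linarith [hadd]
      rw [heq]
      have hbd : ∀ μ ∈ Set.uIoc t τ, ‖c / Dfun a b v C μ‖ ≤ |c| / m2 := by
        intro μ hμ
        rw [Real.norm_eq_abs]
        exact hhabs C μ hCm (Set.uIcc_subset_Icc htmemIcc hτT (Set.uIoc_subset_uIcc hμ))
      have := intervalIntegral.norm_integral_le_of_norm_le_const hbd
      rwa [Real.norm_eq_abs] at this
    -- step 2 : variation in C
    have hint1' : IntervalIntegrable (fun μ => c / Dfun a b v (Cfun a b v t s) μ) volume 0 t :=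
      hIntSub _ (hhcont _ hC0m) 0 t hmem0 htmemIcc
    have hstep2 : |Gfun a b c v C t - Gfun a b c v (Cfun a b v t s) t| ≤
        |c| / m2 ^ 2 * |C - Cfun a b v t s| * T := by
      have heq : Gfun a b c v C t - Gfun a b c v (Cfun a b v t s) t =
          ∫ μ in (0:ℝ)..t, (c / Dfun a b v C μ - c / Dfun a b v (Cfun a b v t s) μ) := by
        simp only [Gfun]
        rw [intervalIntegral.integral_sub hint1 hint1']
      rw [heq]
      have hbd : ∀ μ ∈ Set.uIoc (0:ℝ) t,
          ‖c / Dfun a b v C μ - c / Dfun a b v (Cfun a b v t s) μ‖ ≤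
            |c| / m2 ^ 2 * |C - Cfun a b v t s| := by
        intro μ hμ
        rw [Real.norm_eq_abs]
        exact hhdiff C _ μ hCm hC0m (Set.uIcc_subset_Icc hmem0 htmemIcc (Set.uIoc_subset_uIcc hμ))
      have := intervalIntegral.norm_integral_le_of_norm_le_const hbd
      rw [Real.norm_eq_abs] at this
      refine this.trans ?_
      have h1 : |t - 0| ≤ T := by rw [sub_zero, abs_of_nonneg ht.le]; exact hTt.le
      exact mul_le_mul_of_nonneg_left h1 (by positivity)
    have htri : |Gfun a b c v C τ - Gfun a b c v (Cfun a b v t s) t| ≤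
        |c| / m2 * |τ - t| + |c| / m2 ^ 2 * |C - Cfun a b v t s| * T := by
      calc |Gfun a b c v C τ - Gfun a b c v (Cfun a b v t s) t|
          ≤ |Gfun a b c v C τ - Gfun a b c v C t| +
            |Gfun a b c v C t - Gfun a b c v (Cfun a b v t s) t| := abs_sub_le _ _ _
        _ ≤ _ := by linarith
    have hc1 : (0:ℝ) ≤ |c| / m2 := by positivity
    have hc2 : (0:ℝ) ≤ |c| / m2 ^ 2 * T := by positivity
    have habs1 : (0:ℝ) ≤ |τ - t| := abs_nonneg _
    have habs2 : (0:ℝ) ≤ |C - Cfun a b v t s| := abs_nonneg _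
    have hDpos : 0 < ε / (2 * (|c| / m2 + |c| / m2 ^ 2 * T + 1)) := by positivity
    have hDe : ε / (2 * (|c| / m2 + |c| / m2 ^ 2 * T + 1)) *
        (2 * (|c| / m2 + |c| / m2 ^ 2 * T + 1)) = ε := div_mul_cancel₀ ε (by positivity)
    nlinarith [mul_le_mul_of_nonneg_left hδε.le hc1,
      mul_le_mul_of_nonneg_left hδεC.le hc2,
      mul_nonneg hc1 hDpos.le, mul_nonneg hc2 hDpos.le, hDpos, htri]
  have hQG : ∀ ε > (0:ℝ), ∃ δ > (0:ℝ), ∀ t' C, |t' - t| < δ → |C - (Cfun a b v t s)| < δ →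
      |Gfun a b c v C t' - Gfun a b c v C t - (c / Dfun a b v (Cfun a b v t s) t) * (t' - t)|
        ≤ ε * |t' - t| := by
    intro ε hε
    have hca : ContinuousAt (fun μ => c / Dfun a b v (Cfun a b v t s) μ) t :=
      (hhcont _ hC0m).continuousAt (Icc_mem_nhds ht hTt)
    obtain ⟨δ1, hδ1, hδ1'⟩ := Metric.continuousAt_iff.mp hca (ε/2) (by linarith)
    refine ⟨min (min t (T - t)) (min m2 (min δ1 (ε * m2 ^ 2 / (2 * (|c| + 1))))),
      lt_min (lt_min ht (by linarith)) (lt_min hm2 (lt_min hδ1 (by positivity))), ?_⟩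
    intro t' C ht'δ hCδ
    have ht'δ1 := (abs_lt.mp (ht'δ.trans_le ((min_le_left _ _).trans (min_le_left _ _)))).1
    have ht'δ2 := (abs_lt.mp (ht'δ.trans_le ((min_le_left _ _).trans (min_le_right _ _)))).2
    have ht'T : t' ∈ Set.Icc (0:ℝ) T := ⟨by linarith, by linarith⟩
    have hCm : |C - Cfun a b v t s| ≤ m2 :=
      (hCδ.trans_le ((min_le_right _ _).trans (min_le_left _ _))).le
    have hCsmall : |C - Cfun a b v t s| ≤ ε * m2 ^ 2 / (2 * (|c| + 1)) :=
      (hCδ.trans_le ((min_le_right _ _).trans ((min_le_right _ _).trans (min_le_right _ _)))).le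
    have hint1 : IntervalIntegrable (fun μ => c / Dfun a b v C μ) volume 0 t :=
      hIntSub _ (hhcont C hCm) 0 t hmem0 htmemIcc
    have hint2 : IntervalIntegrable (fun μ => c / Dfun a b v C μ) volume t t' :=
      hIntSub _ (hhcont C hCm) t t' htmemIcc ht'T
    have hadd := intervalIntegral.integral_add_adjacent_intervals hint1 hint2
    have hintc : IntervalIntegrable
        (fun _ : ℝ => c / Dfun a b v (Cfun a b v t s) t) volume t t' :=
      intervalIntegrable_const
    have heq : Gfun a b c v C t' - Gfun a b c v C t
        - (c / Dfun a b v (Cfun a b v t s) t) * (t' - t) =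
        ∫ μ in t..t', (c / Dfun a b v C μ - c / Dfun a b v (Cfun a b v t s) t) := by
      rw [intervalIntegral.integral_sub hint2 hintc]
      simp only [Gfun]
      rw [intervalIntegral.integral_const]
      have : Gfun a b c v C t' - Gfun a b c v C t =
          ∫ μ in t..t', c / Dfun a b v C μ := by
        simp only [Gfun]; linarith [hadd]
      simp only [Gfun] at this
      rw [this]
      simp [smul_eq_mul]
      ring
    rw [heq]
    have hbd : ∀ μ ∈ Set.uIoc t t',
        ‖c / Dfun a b v C μ - c / Dfun a b v (Cfun a b v t s) t‖ ≤ ε := by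
      intro μ hμ
      have hμT : μ ∈ Set.Icc (0:ℝ) T :=
        Set.uIcc_subset_Icc htmemIcc ht'T (Set.uIoc_subset_uIcc hμ)
      have hμt : |μ - t| < δ1 := by
        have h1 := abs_sub_le_of_mem_uIoc hμ
        calc |μ - t| ≤ |t' - t| := h1
          _ < δ1 := ht'δ.trans_le
            ((min_le_right _ _).trans ((min_le_right _ _).trans (min_le_left _ _)))
      have h2 : |c / Dfun a b v (Cfun a b v t s) μ - c / Dfun a b v (Cfun a b v t s) t|
          < ε / 2 := by
        have := hδ1' (by rwa [Real.dist_eq])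
        rwa [Real.dist_eq] at this
      have h3 : |c / Dfun a b v C μ - c / Dfun a b v (Cfun a b v t s) μ| ≤
          |c| / m2 ^ 2 * |C - Cfun a b v t s| := hhdiff C _ μ hCm hC0m hμT
      have h4 : |c| / m2 ^ 2 * |C - Cfun a b v t s| ≤ ε / 2 := by
        have h5 : |c| / m2 ^ 2 * |C - Cfun a b v t s| ≤
            |c| / m2 ^ 2 * (ε * m2 ^ 2 / (2 * (|c| + 1))) :=
          mul_le_mul_of_nonneg_left hCsmall (by positivity)
        have h6 : |c| / m2 ^ 2 * (ε * m2 ^ 2 / (2 * (|c| + 1))) =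
            ε * (|c| / (|c| + 1)) / 2 := by
          field_simp
        have h7 : |c| / (|c| + 1) ≤ 1 := by
          rw [div_le_one (by positivity)]
          linarith [abs_nonneg c]
        have h8 : ε * (|c| / (|c| + 1)) / 2 ≤ ε / 2 := by
          have := mul_le_mul_of_nonneg_left h7 hε.le
          linarith
        linarith
      rw [Real.norm_eq_abs]
      calc |c / Dfun a b v C μ - c / Dfun a b v (Cfun a b v t s) t|
          ≤ |c / Dfun a b v C μ - c / Dfun a b v (Cfun a b v t s) μ| +
            |c / Dfun a b v (Cfun a b v t s) μ - c / Dfun a b v (Cfun a b v t s) t| :=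
            abs_sub_le _ _ _
        _ ≤ ε := by linarith
    have := intervalIntegral.norm_integral_le_of_norm_le_const hbd
    rw [Real.norm_eq_abs] at this
    exact this
  have hfcont : ∀ C, |C - (Cfun a b v t s)| ≤ m2 →
      ContinuousOn (fun τ => f τ * Real.exp (Gfun a b c v C τ)) (Set.Icc 0 T) := by
    intro C hC
    exact (hf.mono (fun x hx => hx.1)).mul ((hGcont C hC).rexp)
  have hQΨ : ∀ ε > (0:ℝ), ∃ δ > (0:ℝ), ∀ t' C, |t' - t| < δ → |C - (Cfun a b v t s)| < δ →
      |Psif a b c v f C t' - Psif a b c v f C t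
        - (f t * Real.exp (Gfun a b c v (Cfun a b v t s) t)) * (t' - t)| ≤ ε * |t' - t| := by
    intro ε hε
    -- continuity of f at t
    have hfc : ContinuousAt f t := hf.continuousAt
      (Filter.mem_of_superset (Ioi_mem_nhds ht) Set.Ioi_subset_Ici_self)
    obtain ⟨δf, hδf, hδf'⟩ := Metric.continuousAt_iff.mp hfc
      (min 1 (ε / (2 * (Real.exp (Gfun a b c v (Cfun a b v t s) t) + 1))))
      (lt_min one_pos (by positivity))
    -- continuity of exp at G t C₀
    have hec : ContinuousAt Real.exp (Gfun a b c v (Cfun a b v t s) t) :=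
      Real.continuous_exp.continuousAt
    obtain ⟨δe, hδe, hδe'⟩ := Metric.continuousAt_iff.mp hec
      (ε / (2 * (|f t| + 1))) (by positivity)
    obtain ⟨δg, hδg, hδg'⟩ := hGjoint δe hδe
    refine ⟨min (min t (T - t)) (min m2 (min δf δg)),
      lt_min (lt_min ht (by linarith)) (lt_min hm2 (lt_min hδf hδg)), ?_⟩
    intro t' C ht'δ hCδ
    have ht'δ1 := (abs_lt.mp (ht'δ.trans_le ((min_le_left _ _).trans (min_le_left _ _)))).1
    have ht'δ2 := (abs_lt.mp (ht'δ.trans_le ((min_le_left _ _).trans (min_le_right _ _)))).2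
    have ht'T : t' ∈ Set.Icc (0:ℝ) T := ⟨by linarith, by linarith⟩
    have hCm : |C - Cfun a b v t s| ≤ m2 :=
      (hCδ.trans_le ((min_le_right _ _).trans (min_le_left _ _))).le
    have hCg : |C - Cfun a b v t s| < δg :=
      hCδ.trans_le ((min_le_right _ _).trans ((min_le_right _ _).trans (min_le_right _ _)))
    have hint1 : IntervalIntegrable (fun τ => f τ * Real.exp (Gfun a b c v C τ)) volume 0 t :=
      hIntSub _ (hfcont C hCm) 0 t hmem0 htmemIcc
    have hint2 : IntervalIntegrable (fun τ => f τ * Real.exp (Gfun a b c v C τ)) volume t t' :=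
      hIntSub _ (hfcont C hCm) t t' htmemIcc ht'T
    have hadd := intervalIntegral.integral_add_adjacent_intervals hint1 hint2
    have hintc : IntervalIntegrable
        (fun _ : ℝ => f t * Real.exp (Gfun a b c v (Cfun a b v t s) t)) volume t t' :=
      intervalIntegrable_const
    have heq : Psif a b c v f C t' - Psif a b c v f C t
        - (f t * Real.exp (Gfun a b c v (Cfun a b v t s) t)) * (t' - t) =
        ∫ τ in t..t', (f τ * Real.exp (Gfun a b c v C τ)
          - f t * Real.exp (Gfun a b c v (Cfun a b v t s) t)) := by
      rw [intervalIntegral.integral_sub hint2 hintc]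
      rw [intervalIntegral.integral_const]
      have h1 : Psif a b c v f C t' - Psif a b c v f C t =
          ∫ τ in t..t', f τ * Real.exp (Gfun a b c v C τ) := by
        simp only [Psif]; linarith [hadd]
      rw [h1]
      simp [smul_eq_mul]
      ring
    rw [heq]
    have hbd : ∀ τ ∈ Set.uIoc t t',
        ‖f τ * Real.exp (Gfun a b c v C τ)
          - f t * Real.exp (Gfun a b c v (Cfun a b v t s) t)‖ ≤ ε := by
      intro τ hτ
      have hτt : |τ - t| ≤ |t' - t| := abs_sub_le_of_mem_uIoc hτ
      have hτδf : |τ - t| < δf := lt_of_le_of_lt hτt (ht'δ.trans_le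
        ((min_le_right _ _).trans ((min_le_right _ _).trans (min_le_left _ _))))
      have hτδg : |τ - t| < δg := lt_of_le_of_lt hτt (ht'δ.trans_le
        ((min_le_right _ _).trans ((min_le_right _ _).trans (min_le_right _ _))))
      have hfτ : |f τ - f t| < min 1 (ε / (2 * (Real.exp (Gfun a b c v (Cfun a b v t s) t) + 1))) := by
        have := hδf' (by rwa [Real.dist_eq])
        rwa [Real.dist_eq] at this
      have hGτ : |Gfun a b c v C τ - Gfun a b c v (Cfun a b v t s) t| < δe :=
        hδg' τ C hτδg hCg
      have hexpτ : |Real.exp (Gfun a b c v C τ)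
          - Real.exp (Gfun a b c v (Cfun a b v t s) t)| < ε / (2 * (|f t| + 1)) := by
        have := hδe' (by rwa [Real.dist_eq])
        rwa [Real.dist_eq] at this
      have hfb : |f τ| ≤ |f t| + 1 := by
        have h1 := (lt_min_iff.mp hfτ).1
        have := abs_sub_abs_le_abs_sub (f τ) (f t)
        linarith
      rw [Real.norm_eq_abs]
      have hdec : f τ * Real.exp (Gfun a b c v C τ)
          - f t * Real.exp (Gfun a b c v (Cfun a b v t s) t)
          = f τ * (Real.exp (Gfun a b c v C τ)
              - Real.exp (Gfun a b c v (Cfun a b v t s) t))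
            + (f τ - f t) * Real.exp (Gfun a b c v (Cfun a b v t s) t) := by ring
      rw [hdec]
      have hE0 : (0:ℝ) < Real.exp (Gfun a b c v (Cfun a b v t s) t) := Real.exp_pos _
      have hstep1 : |f τ * (Real.exp (Gfun a b c v C τ)
          - Real.exp (Gfun a b c v (Cfun a b v t s) t))| ≤ ε / 2 := by
        rw [abs_mul]
        have h1 : |f τ| * |Real.exp (Gfun a b c v C τ)
            - Real.exp (Gfun a b c v (Cfun a b v t s) t)| ≤
            (|f t| + 1) * (ε / (2 * (|f t| + 1))) := by
          apply mul_le_mul hfb hexpτ.le (abs_nonneg _) (by positivity)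
        have h2 : (|f t| + 1) * (ε / (2 * (|f t| + 1))) = ε / 2 := by
          field_simp
        linarith
      have hstep2 : |(f τ - f t) * Real.exp (Gfun a b c v (Cfun a b v t s) t)| ≤ ε / 2 := by
        rw [abs_mul, abs_of_pos hE0]
        have h1 := (lt_min_iff.mp hfτ).2
        have h2 : |f τ - f t| * Real.exp (Gfun a b c v (Cfun a b v t s) t) ≤
            (ε / (2 * (Real.exp (Gfun a b c v (Cfun a b v t s) t) + 1))) *
            Real.exp (Gfun a b c v (Cfun a b v t s) t) :=
          mul_le_mul_of_nonneg_right h1.le hE0.le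
        have h3 : (ε / (2 * (Real.exp (Gfun a b c v (Cfun a b v t s) t) + 1))) *
            Real.exp (Gfun a b c v (Cfun a b v t s) t) ≤ ε / 2 := by
          rw [div_mul_eq_mul_div, div_le_div_iff₀ (by positivity) (by norm_num)]
          nlinarith [hE0, hε]
        linarith
      calc |f τ * (Real.exp (Gfun a b c v C τ)
            - Real.exp (Gfun a b c v (Cfun a b v t s) t))
          + (f τ - f t) * Real.exp (Gfun a b c v (Cfun a b v t s) t)|
          ≤ |f τ * (Real.exp (Gfun a b c v C τ)
            - Real.exp (Gfun a b c v (Cfun a b v t s) t))|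
          + |(f τ - f t) * Real.exp (Gfun a b c v (Cfun a b v t s) t)| := abs_add_le _ _
        _ ≤ ε := by linarith
    have := intervalIntegral.norm_integral_le_of_norm_le_const hbd
    rwa [Real.norm_eq_abs] at this
  have hΨC : HasDerivAt (fun C => Psif a b c v f C t)
      (∫ τ in (0:ℝ)..t, f τ * Real.exp (Gfun a b c v (Cfun a b v t s) τ) * Pfun a b c v (Cfun a b v t s) τ) (Cfun a b v t s) := by
    obtain ⟨Mf, hMf⟩ := isCompact_Icc.exists_bound_of_continuousOn
      (hf.mono (fun x (hx : x ∈ Set.Icc (0:ℝ) T) => hx.1))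
    have huIoc : Set.uIoc (0:ℝ) t ⊆ Set.Icc 0 T := by
      rw [Set.uIoc_of_le ht.le]
      exact Set.Ioc_subset_Icc_self.trans (Set.Icc_subset_Icc le_rfl hTt.le)
    have hsub : ∀ C ∈ Metric.ball (Cfun a b v t s) m2, |C - Cfun a b v t s| ≤ m2 := by
      intro C hCb
      rw [Metric.mem_ball, Real.dist_eq] at hCb
      exact hCb.le
    simp only [Psif]
    refine (intervalIntegral.hasDerivAt_integral_of_dominated_loc_of_deriv_le
      (F := fun C τ => f τ * Real.exp (Gfun a b c v C τ))
      (F' := fun C τ => f τ * Real.exp (Gfun a b c v C τ) * Pfun a b c v C τ)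
      (bound := fun _ => Mf * Real.exp (|c| / m2 * T) * (|c| / m2 ^ 2 * T)) (Metric.ball_mem_nhds _ hm2)
      ?_ ?_ ?_ ?_ ?_ ?_).2
    · filter_upwards [Metric.ball_mem_nhds _ hm2] with C hCb
      exact ((hfcont C (hsub C hCb)).mono huIoc).aestronglyMeasurable measurableSet_uIoc
    · exact hIntSub _ (hfcont _ hC0m) 0 t hmem0 htmemIcc
    · have hcontF' : ContinuousOn (fun τ => f τ * Real.exp (Gfun a b c v (Cfun a b v t s) τ)
          * Pfun a b c v (Cfun a b v t s) τ) (Set.Icc 0 T) :=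
        (hfcont _ hC0m).mul hPcont
      exact (hcontF'.mono huIoc).aestronglyMeasurable measurableSet_uIoc
    · refine Eventually.of_forall (fun τ hτ C hCb => ?_)
      have hτT := huIoc hτ
      have hCm := hsub C hCb
      rw [Real.norm_eq_abs, abs_mul, abs_mul]
      have h1 : |f τ| ≤ Mf := hMf τ hτT
      have h2 : |Real.exp (Gfun a b c v C τ)| ≤ Real.exp (|c| / m2 * T) := by
        rw [abs_of_pos (Real.exp_pos _)]
        exact Real.exp_le_exp.mpr ((le_abs_self _).trans (hGbound C τ hCm hτT))
      have h3 : |Pfun a b c v C τ| ≤ |c| / m2 ^ 2 * T := hPbound C τ hCm hτT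
      have hMf0 : 0 ≤ Mf := le_trans (abs_nonneg _) (hMf t htmemIcc)
      exact mul_le_mul (mul_le_mul h1 h2 (abs_nonneg _) hMf0) h3 (abs_nonneg _)
        (by positivity)
    · exact intervalIntegrable_const
    · refine Eventually.of_forall (fun τ hτ C hCb => ?_)
      have hτT := huIoc hτ
      have hCb' : |C - Cfun a b v t s| < m2 := by
        rw [Metric.mem_ball, Real.dist_eq] at hCb
        exact hCb
      have hGd := hGC C hCb' τ hτT
      have := (hGd.exp).const_mul (f τ)
      refine this.congr_deriv ?_
      ring
  -- derivatives of `Cfun`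
  have hσ : HasDerivAt (fun t' => Cfun a b v t' s)
      (a * t ^ (2*v - 1) * Real.exp (-(b*t)) - b / (s * Real.exp (b*t))) t := by
    have heq : (fun t' => Cfun a b v t' s) = fun t' =>
        (s * Real.exp (b * t'))⁻¹ - a * b ^ (-(2*v)) * upperGamma (2*v) (b * t') := by
      funext t'
      have hE' : Real.exp (b * t') ≠ 0 := ne_of_gt (Real.exp_pos _)
      simp only [Cfun]
      field_simp
    rw [heq]
    have h1 : HasDerivAt (fun t' => s * Real.exp (b*t')) (s * (Real.exp (b*t) * b)) t :=
      (hbt'.exp).const_mul s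
    have hinv := h1.inv (by positivity)
    have h2 : HasDerivAt (fun t' => upperGamma (2*v) (b*t'))
        (-((b*t) ^ (2*v-1) * Real.exp (-(b*t))) * b) t :=
      (hasDerivAt_upperGamma hq hbt).comp t hbt'
    have htotal := hinv.sub (h2.const_mul (a * b ^ (-(2*v))))
    refine htotal.congr_deriv ?_
    have hrp : b ^ (-(2*v)) * ((b*t) ^ (2*v-1)) * b = t ^ (2*v-1) := by
      rw [Real.mul_rpow hb.le ht.le]
      rw [show b ^ (-(2*v)) * (b ^ (2*v-1) * t ^ (2*v-1)) * b
        = (b ^ (-(2*v)) * b ^ (2*v-1) * b) * t ^ (2*v-1) by ring]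
      rw [← Real.rpow_add hb, ← Real.rpow_add_one (ne_of_gt hb)]
      rw [show -(2*v) + (2*v - 1) + 1 = (0:ℝ) by ring, Real.rpow_zero, one_mul]
    have hEne : Real.exp (b*t) ≠ 0 := ne_of_gt hE
    rw [Real.exp_neg] at *
    field_simp
    linear_combination (a * s) * hrp
  have hρ : HasDerivAt (fun s' => Cfun a b v t s')
      (-(1 / (s ^ 2 * Real.exp (b*t)))) s := by
    have hev : (fun s' => (s' * Real.exp (b * t))⁻¹
        - a * b ^ (-(2*v)) * upperGamma (2*v) (b * t)) =ᶠ[𝓝 s]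
        (fun s' => Cfun a b v t s') := by
      filter_upwards [eventually_ne_nhds hsne] with s' hs'
      simp only [Cfun]
      field_simp
    refine HasDerivAt.congr_of_eventuallyEq ?_ hev.symm
    have h1 : HasDerivAt (fun s' => s' * Real.exp (b*t)) (Real.exp (b*t)) s := by
      simpa using (hasDerivAt_id s).mul_const (Real.exp (b*t))
    have hinv := h1.inv (by positivity)
    have := hinv.sub_const (a * b ^ (-(2*v)) * upperGamma (2*v) (b * t))
    refine this.congr_deriv ?_
    field_simp
  -- key scalar identities
  have hDst : Dfun a b v (Cfun a b v t s) t = 1 / s := by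
    simp only [Dfun, Cfun]
    field_simp
    ring
  have hH00 : 0 < Hfun a b v (Cfun a b v t s) 0 := by
    have h := hpos 0 ⟨le_rfl, ht.le⟩
    rw [Dfun_eq] at h
    simpa using h
  have hA0 : Afun a b v t s = (Hfun a b v (Cfun a b v t s) 0)⁻¹ := by
    have hdne : 1 - s * Real.exp (b * t) * a * b ^ (-(2 * v)) *
        (upperGamma (2 * v) (b * t) - upperGamma (2 * v) 0) ≠ 0 := ne_of_gt hden
    have hHne : Hfun a b v (Cfun a b v t s) 0 ≠ 0 := ne_of_gt hH00
    simp only [Afun]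
    rw [inv_eq_one_div, div_eq_div_iff hdne hHne]
    simp only [Hfun, Cfun]
    field_simp
    ring
  -- derivative of piT at the point
  obtain ⟨dπ, hdπ⟩ : ∃ dπ, HasDerivAt piT dπ ((Hfun a b v (Cfun a b v t s) 0)⁻¹) := by
    have hmem : (Hfun a b v (Cfun a b v t s) 0)⁻¹ ∈ Set.Ioi (0:ℝ) := by
      simp only [Set.mem_Ioi]; positivity
    have := ((hπ.differentiableOn one_ne_zero).differentiableAt
      (Ioi_mem_nhds hmem)).hasDerivAt
    exact ⟨_, this⟩
  have hHC0 : HasDerivAt (fun C => (Hfun a b v C 0)⁻¹) (-(1 / (Hfun a b v (Cfun a b v t s) 0) ^ 2)) (Cfun a b v t s) := by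
    have hlin : HasDerivAt (fun C => Hfun a b v C 0) 1 (Cfun a b v t s) := by
      simp only [Hfun]
      simpa using (hasDerivAt_id (Cfun a b v t s)).const_add
        (a * b ^ (-(2*v)) * upperGamma (2*v) (b*0))
    have := hlin.inv (ne_of_gt hH00)
    refine this.congr_deriv ?_
    ring
  -- eventual equalities
  have hAev_t : (fun t' => omegaSol a b c v piT f t' s) =ᶠ[𝓝 t] fun t' =>
      Real.exp (-Gfun a b c v (Cfun a b v t' s) t') *
        piT ((Hfun a b v (Cfun a b v t' s) 0)⁻¹) +
      Real.exp (-Gfun a b c v (Cfun a b v t' s) t') *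
        Psif a b c v f (Cfun a b v t' s) t' := by
    have hcΓ : ContinuousAt (fun t' => upperGamma (2*v) (b*t')) t :=
      ((hasDerivAt_upperGamma hq hbt).comp t hbt').continuousAt
    have hcden : ContinuousAt (fun t' => 1 - s * Real.exp (b * t') * a * b ^ (-(2 * v)) *
        (upperGamma (2 * v) (b * t') - upperGamma (2 * v) 0)) t := by
      have h1 : ContinuousAt (fun t' : ℝ => s * Real.exp (b * t') * a * b ^ (-(2 * v))) t := by
        fun_prop
      exact continuousAt_const.sub (h1.mul (hcΓ.sub continuousAt_const))
    have hevden : ∀ᶠ t' in 𝓝 t, 0 < 1 - s * Real.exp (b * t') * a * b ^ (-(2 * v)) *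
        (upperGamma (2 * v) (b * t') - upperGamma (2 * v) 0) :=
      continuousAt_const.eventually_lt hcden hden
    filter_upwards [hevden] with t' hden'
    have hAft' : Afun a b v t' s = (Hfun a b v (Cfun a b v t' s) 0)⁻¹ := by
      have hdne := ne_of_gt hden'
      have hE' : (0:ℝ) < Real.exp (b * t') := Real.exp_pos _
      have hH' : Hfun a b v (Cfun a b v t' s) 0 ≠ 0 := by
        have : Hfun a b v (Cfun a b v t' s) 0 =
            (1 - s * Real.exp (b * t') * a * b ^ (-(2 * v)) *
              (upperGamma (2 * v) (b * t') - upperGamma (2 * v) 0)) /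
            (s * Real.exp (b * t')) := by
          simp only [Hfun, Cfun]
          field_simp
          ring
        rw [this]
        positivity
      simp only [Afun]
      rw [inv_eq_one_div, div_eq_div_iff hdne hH']
      simp only [Hfun, Cfun]
      field_simp
      ring
    simp only [omegaSol, Psif, hAft']
  have hAev_s : (fun s' => omegaSol a b c v piT f t s') =ᶠ[𝓝 s] fun s' =>
      Real.exp (-Gfun a b c v (Cfun a b v t s') t) *
        piT ((Hfun a b v (Cfun a b v t s') 0)⁻¹) +
      Real.exp (-Gfun a b c v (Cfun a b v t s') t) *
        Psif a b c v f (Cfun a b v t s') t := by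
    have hcden : ContinuousAt (fun s' => 1 - s' * Real.exp (b * t) * a * b ^ (-(2 * v)) *
        (upperGamma (2 * v) (b * t) - upperGamma (2 * v) 0)) s := by fun_prop
    have hevden : ∀ᶠ s' in 𝓝 s, 0 < 1 - s' * Real.exp (b * t) * a * b ^ (-(2 * v)) *
        (upperGamma (2 * v) (b * t) - upperGamma (2 * v) 0) :=
      continuousAt_const.eventually_lt hcden hden
    filter_upwards [hevden, eventually_gt_nhds hs] with s' hden' hs'
    have hAfs' : Afun a b v t s' = (Hfun a b v (Cfun a b v t s') 0)⁻¹ := by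
      have hdne := ne_of_gt hden'
      have hH' : Hfun a b v (Cfun a b v t s') 0 ≠ 0 := by
        have : Hfun a b v (Cfun a b v t s') 0 =
            (1 - s' * Real.exp (b * t) * a * b ^ (-(2 * v)) *
              (upperGamma (2 * v) (b * t) - upperGamma (2 * v) 0)) /
            (s' * Real.exp (b * t)) := by
          simp only [Hfun, Cfun]
          field_simp
          ring
        rw [this]
        positivity
      simp only [Afun]
      rw [inv_eq_one_div, div_eq_div_iff hdne hH']
      simp only [Hfun, Cfun]
      field_simp
      ring
    simp only [omegaSol, Psif, hAfs']
  have hω_val : omegaSol a b c v piT f t s =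
      Real.exp (-Gfun a b c v (Cfun a b v t s) t) * piT ((Hfun a b v (Cfun a b v t s) 0)⁻¹) +
        Real.exp (-Gfun a b c v (Cfun a b v t s) t) * Psif a b c v f (Cfun a b v t s) t := by
    simp only [omegaSol, Psif]
    rw [hA0]
  -- assembly : t-direction
  have hχ : HasDerivAt (fun C => piT ((Hfun a b v C 0)⁻¹))
      (dπ * -(1 / (Hfun a b v (Cfun a b v t s) 0) ^ 2)) (Cfun a b v t s) := hdπ.comp (Cfun a b v t s) hHC0
  have hGt : HasDerivAt (fun t' => Gfun a b c v (Cfun a b v t' s) t')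
      (c / Dfun a b v (Cfun a b v t s) t + Pfun a b c v (Cfun a b v t s) t *
        (a * t ^ (2*v - 1) * Real.exp (-(b*t)) - b / (s * Real.exp (b*t)))) t :=
    hasDerivAt_comp2 (Φ := fun t' C => Gfun a b c v C t') hσ rfl
      (hGC (Cfun a b v t s) (by simpa using hm2) t htmemIcc) hQG
  have hΨt : HasDerivAt (fun t' => Psif a b c v f (Cfun a b v t' s) t')
      (f t * Real.exp (Gfun a b c v (Cfun a b v t s) t) +
        (∫ τ in (0:ℝ)..t, f τ * Real.exp (Gfun a b c v (Cfun a b v t s) τ) * Pfun a b c v (Cfun a b v t s) τ) *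
        (a * t ^ (2*v - 1) * Real.exp (-(b*t)) - b / (s * Real.exp (b*t)))) t :=
    hasDerivAt_comp2 (Φ := fun t' C => Psif a b c v f C t') hσ rfl hΨC hQΨ
  have hπt : HasDerivAt (fun t' => piT ((Hfun a b v (Cfun a b v t' s) 0)⁻¹))
      ((dπ * -(1 / (Hfun a b v (Cfun a b v t s) 0) ^ 2)) *
        (a * t ^ (2*v - 1) * Real.exp (-(b*t)) - b / (s * Real.exp (b*t)))) t := by
    have := hχ.comp t (hσ)
    exact this
  have hexp_t : HasDerivAt (fun t' => Real.exp (-Gfun a b c v (Cfun a b v t' s) t'))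
      (Real.exp (-Gfun a b c v (Cfun a b v t s) t) *
        -(c / Dfun a b v (Cfun a b v t s) t + Pfun a b c v (Cfun a b v t s) t *
          (a * t ^ (2*v - 1) * Real.exp (-(b*t)) - b / (s * Real.exp (b*t))))) t := by
    have := hGt.neg.exp
    simpa using this
  have hd1 := ((hexp_t.mul hπt).add (hexp_t.mul hΨt)).congr_of_eventuallyEq hAev_t
  -- assembly : s-direction
  have hGs : HasDerivAt (fun s' => Gfun a b c v (Cfun a b v t s') t)
      (Pfun a b c v (Cfun a b v t s) t * -(1 / (s ^ 2 * Real.exp (b*t)))) s :=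
    (hGC (Cfun a b v t s) (by simpa using hm2) t htmemIcc).comp s (hρ)
  have hΨs : HasDerivAt (fun s' => Psif a b c v f (Cfun a b v t s') t)
      ((∫ τ in (0:ℝ)..t, f τ * Real.exp (Gfun a b c v (Cfun a b v t s) τ) * Pfun a b c v (Cfun a b v t s) τ) *
        -(1 / (s ^ 2 * Real.exp (b*t)))) s :=
    hΨC.comp s (hρ)
  have hπs : HasDerivAt (fun s' => piT ((Hfun a b v (Cfun a b v t s') 0)⁻¹))
      ((dπ * -(1 / (Hfun a b v (Cfun a b v t s) 0) ^ 2)) * -(1 / (s ^ 2 * Real.exp (b*t)))) s :=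
    hχ.comp s (hρ)
  have hexp_s : HasDerivAt (fun s' => Real.exp (-Gfun a b c v (Cfun a b v t s') t))
      (Real.exp (-Gfun a b c v (Cfun a b v t s) t) *
        -(Pfun a b c v (Cfun a b v t s) t * -(1 / (s ^ 2 * Real.exp (b*t))))) s := by
    have := hGs.neg.exp
    simpa using this
  have hd2 := ((hexp_s.mul hπs).add (hexp_s.mul hΨs)).congr_of_eventuallyEq hAev_s
  refine ⟨_, _, hd1, hd2, ?_⟩
  -- final algebra
  rw [hω_val, hDst]
  have hcs : c / (1 / s) = c * s := by
    field_simp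
  rw [hcs]
  have hEgX : Real.exp (-Gfun a b c v (Cfun a b v t s) t) *
      Real.exp (Gfun a b c v (Cfun a b v t s) t) = 1 := by
    rw [← Real.exp_add]; simp
  have hEne : Real.exp (b * t) ≠ 0 := ne_of_gt hE
  have hSR : (a * t ^ (2*v - 1) * Real.exp (-(b*t)) - b / (s * Real.exp (b*t)))
      + s * (a * t ^ (2 * v - 1) * s - b) * -(1 / (s ^ 2 * Real.exp (b*t))) = 0 := by
    rw [Real.exp_neg]
    field_simp
    ring
  linear_combination (f t) * hEgX +
    (Real.exp (-Gfun a b c v (Cfun a b v t s) t) *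
      (-(Pfun a b c v (Cfun a b v t s) t * piT ((Hfun a b v (Cfun a b v t s) 0)⁻¹))
        + dπ * -(1 / (Hfun a b v (Cfun a b v t s) 0) ^ 2)
        - Pfun a b c v (Cfun a b v t s) t * Psif a b c v f (Cfun a b v t s) t
        + (∫ τ in (0:ℝ)..t, f τ * Real.exp (Gfun a b c v (Cfun a b v t s) τ) *
            Pfun a b c v (Cfun a b v t s) τ))) * hSR
end

section
/- Let a, b, c, v be real constants with a > 0, b > 0, v > 0, and let π : (0, ∞) → ℝ be a function such that L := lim_{σ → 0⁺} π(σ) exists. With C(t, s) := (1 − s·a·b^(−2v)·Γ(2v, bt)·e^(bt)) / (s·e^(bt)), A(t, s) := s·e^(bt) / (1 − s·e^(bt)·a·b^(−2v)·(Γ(2v, bt) − Γ(2v))), G(t; C) := ∫_0^t c / (a·b^(−2v)·Γ(2v, bμ)·e^(bμ) + e^(bμ)·C) dμ, and ω(t, s) := e^(−G(t; C(t,s)))·π(A(t, s)), one has, for every fixed t > 0, lim_{s → 0⁺} ω(t, s) = L. -/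
open Real MeasureTheory intervalIntegral

lemma upperGamma_nonneg (q p : ℝ) (hp : 0 ≤ p) : 0 ≤ upperGamma q p := by
  apply MeasureTheory.setIntegral_nonneg measurableSet_Ioi
  intro x hx
  have hx0 : 0 ≤ x := hp.trans (le_of_lt hx)
  positivity

lemma Dfun_ge (a b v C μ : ℝ) (ha : 0 < a) (hb : 0 < b) (hμ : 0 ≤ μ) (hC : 0 < C) :
    C ≤ Dfun a b v C μ := by
  have h1 : 0 ≤ a * b ^ (-(2 * v)) * upperGamma (2 * v) (b * μ) * Real.exp (b * μ) := by
    have := upperGamma_nonneg (2 * v) (b * μ) (by positivity)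
    positivity
  have h2 : C ≤ Real.exp (b * μ) * C := by
    nlinarith [Real.one_le_exp (by positivity : (0:ℝ) ≤ b * μ)]
  unfold Dfun; linarith

lemma Gfun_bound (a b c v C t : ℝ) (ha : 0 < a) (hb : 0 < b) (ht : 0 < t) (hC : 0 < C) :
    |Gfun a b c v C t| ≤ |c| / C * t := by
  have h : ∀ μ ∈ Set.uIoc (0:ℝ) t, ‖c / Dfun a b v C μ‖ ≤ |c| / C := by
    intro μ hμ
    rw [Set.uIoc_of_le ht.le] at hμ
    have hD := Dfun_ge a b v C μ ha hb hμ.1.le hC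
    have hDpos : 0 < Dfun a b v C μ := lt_of_lt_of_le hC hD
    rw [Real.norm_eq_abs, abs_div, abs_of_pos hDpos]
    gcongr
  have h2 := intervalIntegral.norm_integral_le_of_norm_le_const h
  rw [Real.norm_eq_abs] at h2
  calc |Gfun a b c v C t| ≤ |c| / C * |t - 0| := h2
    _ = |c| / C * t := by rw [sub_zero, abs_of_pos ht]

/-- Norm preservation: with `ω(t, s) = e^(−G(t; C(t,s)))·π(A(t, s))`, if `π(σ) → L` as
`σ → 0⁺`, then for every fixed `t > 0`, `ω(t, s) → L` as `s → 0⁺`. -/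
theorem stmt14 (a b c v : ℝ) (ha : 0 < a) (hb : 0 < b) (hv : 0 < v)
    (piT : ℝ → ℝ) (L : ℝ)
    (hL : Filter.Tendsto piT (nhdsWithin 0 (Set.Ioi 0)) (nhds L))
    (t : ℝ) (ht : 0 < t) :
    Filter.Tendsto
      (fun s : ℝ => Real.exp (-Gfun a b c v (Cfun a b v t s) t) * piT (Afun a b v t s))
      (nhdsWithin 0 (Set.Ioi 0)) (nhds L) := by
  set E := Real.exp (b * t) with hE
  have hEpos : 0 < E := Real.exp_pos _
  -- C(t,s) → +∞
  have hden : Filter.Tendsto (fun s : ℝ => s * E) (nhdsWithin 0 (Set.Ioi 0))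
      (nhdsWithin 0 (Set.Ioi 0)) := by
    rw [tendsto_nhdsWithin_iff]
    constructor
    · have : Filter.Tendsto (fun s : ℝ => s * E) (nhds 0) (nhds (0 * E)) :=
        (continuous_id.mul continuous_const).tendsto 0
      simpa using this.mono_left nhdsWithin_le_nhds
    · filter_upwards [self_mem_nhdsWithin] with s hs
      exact mul_pos hs hEpos
  have hnum : Filter.Tendsto
      (fun s : ℝ => 1 - s * a * b ^ (-(2 * v)) * upperGamma (2 * v) (b * t) * E)
      (nhdsWithin 0 (Set.Ioi 0)) (nhds 1) := by
    have : Continuous (fun s : ℝ =>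
        1 - s * a * b ^ (-(2 * v)) * upperGamma (2 * v) (b * t) * E) := by continuity
    have h0 := this.tendsto 0
    simp only [zero_mul, mul_zero, sub_zero] at h0
    simpa using h0.mono_left nhdsWithin_le_nhds
  have hCtop : Filter.Tendsto (fun s : ℝ => Cfun a b v t s) (nhdsWithin 0 (Set.Ioi 0))
      Filter.atTop := by
    have hinv := hden.inv_tendsto_nhdsGT_zero
    have := hnum.pos_mul_atTop one_pos hinv
    refine this.congr fun s => ?_
    simp [Cfun, div_eq_mul_inv, hE]
  -- G → 0
  have hG : Filter.Tendsto (fun s : ℝ => Gfun a b c v (Cfun a b v t s) t)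
      (nhdsWithin 0 (Set.Ioi 0)) (nhds 0) := by
    have hbound : ∀ᶠ s in nhdsWithin (0:ℝ) (Set.Ioi 0),
        ‖Gfun a b c v (Cfun a b v t s) t‖ ≤ |c| / Cfun a b v t s * t := by
      filter_upwards [hCtop.eventually_gt_atTop 0] with s hs
      exact Gfun_bound a b c v _ t ha hb ht hs
    have h1 : Filter.Tendsto (fun s : ℝ => (Cfun a b v t s)⁻¹)
        (nhdsWithin 0 (Set.Ioi 0)) (nhds 0) := tendsto_inv_atTop_zero.comp hCtop
    have h2 : Filter.Tendsto (fun s : ℝ => |c| / Cfun a b v t s * t)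
        (nhdsWithin 0 (Set.Ioi 0)) (nhds 0) := by
      have := (h1.const_mul |c|).mul_const t
      simpa [div_eq_mul_inv] using this
    exact squeeze_zero_norm' hbound h2
  have hexp : Filter.Tendsto (fun s : ℝ => Real.exp (-Gfun a b c v (Cfun a b v t s) t))
      (nhdsWithin 0 (Set.Ioi 0)) (nhds 1) := by
    have := (hG.neg).rexp
    simpa using this
  -- A → 0⁺
  have hAden : Filter.Tendsto
      (fun s : ℝ => 1 - s * E * a * b ^ (-(2 * v)) *
        (upperGamma (2 * v) (b * t) - upperGamma (2 * v) 0))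
      (nhdsWithin 0 (Set.Ioi 0)) (nhds 1) := by
    have : Continuous (fun s : ℝ => 1 - s * E * a * b ^ (-(2 * v)) *
        (upperGamma (2 * v) (b * t) - upperGamma (2 * v) 0)) := by continuity
    have h0 := this.tendsto 0
    simp only [zero_mul, mul_zero, sub_zero] at h0
    simpa using h0.mono_left nhdsWithin_le_nhds
  have hA : Filter.Tendsto (fun s : ℝ => Afun a b v t s) (nhdsWithin 0 (Set.Ioi 0))
      (nhdsWithin 0 (Set.Ioi 0)) := by
    rw [tendsto_nhdsWithin_iff]
    constructor
    · have := (hden.mono_right nhdsWithin_le_nhds).div hAden one_ne_zero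
      simpa [Afun, hE, Pi.div_def] using this
    · have hev : ∀ᶠ s in nhdsWithin 0 (Set.Ioi 0),
          0 < 1 - s * E * a * b ^ (-(2 * v)) *
            (upperGamma (2 * v) (b * t) - upperGamma (2 * v) 0) :=
        hAden.eventually (eventually_gt_nhds one_pos)
      filter_upwards [hev, self_mem_nhdsWithin] with s hpos hs
      show 0 < Afun a b v t s
      unfold Afun
      rw [← hE]
      exact div_pos (mul_pos hs hEpos) hpos
  have hpi : Filter.Tendsto (fun s : ℝ => piT (Afun a b v t s))
      (nhdsWithin 0 (Set.Ioi 0)) (nhds L) := hL.comp hA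
  have := hexp.mul hpi
  simpa using this
end
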